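/- Let Λ be a lattice of full rank in ℝ² with dual lattice Λ*. Then ω(Λ*) = ω(Λ). -/

import Mathlib

open scoped BigOperators

noncomputable section

/-- The multiplicative function `Π(x) = ∏ i |x_i|^{1/d}`. -/
def Pibar (d : ℕ) (x : Fin d → ℝ) : ℝ := ∏ i, |x i| ^ (1 / (d : ℝ))

/-- The Diophantine exponent of a lattice `Λ ⊆ ℝ^d` (sup-norm `‖·‖`). -/
def dioExp (d : ℕ) (Λ : Set (Fin d → ℝ)) : EReal :=
  sSup {g : EReal | ∃ γ : ℝ, g = (γ : EReal) ∧
    {x : Fin d → ℝ | x ∈ Λ ∧ Pibar d x ≤ ‖x‖ ^ (-γ)}.Infinite}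

/-- `Λ` is a lattice of full rank in `ℝ^d`. -/
def IsFullLattice (d : ℕ) (Λ : Set (Fin d → ℝ)) : Prop :=
  ∃ A : Matrix (Fin d) (Fin d) ℝ, A.det ≠ 0 ∧
    Λ = {x | ∃ z : Fin d → ℤ, x = A.mulVec fun i => (z i : ℝ)}

/-- The dual lattice `Λ* = {y : ⟨y,x⟩ ∈ ℤ for all x ∈ Λ}`. -/
def dualLattice (d : ℕ) (Λ : Set (Fin d → ℝ)) : Set (Fin d → ℝ) :=
  {y | ∀ x ∈ Λ, ∃ n : ℤ, ∑ i, y i * x i = (n : ℝ)}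

-- discreteness
lemma lat_finite {Λ : Set (Fin 2 → ℝ)} (hΛ : IsFullLattice 2 Λ) (R : ℝ) :
    {x | x ∈ Λ ∧ ‖x‖ ≤ R}.Finite := by
  obtain ⟨A, hdet, hL⟩ := hΛ
  set B := A⁻¹ with hB
  set K : ℝ := ∑ i, ∑ j, |B i j| with hK
  set N : ℤ := ⌈K * R⌉ with hN
  have hfin : ((fun z : Fin 2 → ℤ => A.mulVec fun i => (z i : ℝ)) ''
      (Set.univ.pi fun _ : Fin 2 => Set.Icc (-N) N)).Finite :=
    (Set.Finite.pi fun _ => Set.finite_Icc _ _).image _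
  refine hfin.subset ?_
  rintro x ⟨hx, hxR⟩
  rw [hL] at hx; obtain ⟨z, rfl⟩ := hx
  refine ⟨z, fun i _ => ?_, rfl⟩
  set x : Fin 2 → ℝ := A.mulVec fun i => (z i : ℝ) with hx
  have hR0 : 0 ≤ R := le_trans (norm_nonneg _) hxR
  have hrec : ((z i : ℝ)) = (B.mulVec x) i := by
    rw [hx, Matrix.mulVec_mulVec, hB, Matrix.nonsing_inv_mul A (isUnit_iff_ne_zero.2 hdet), Matrix.one_mulVec]
  have hbound : |(z i : ℝ)| ≤ K * R := by
    rw [hrec]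
    calc |(B.mulVec x) i| = |∑ j, B i j * x j| := by
          simp [Matrix.mulVec, dotProduct]
      _ ≤ ∑ j, |B i j * x j| := Finset.abs_sum_le_sum_abs _ _
      _ ≤ ∑ j, |B i j| * R := Finset.sum_le_sum (fun j _ => by
          rw [abs_mul]
          exact mul_le_mul_of_nonneg_left
            (le_trans (by simpa [Real.norm_eq_abs] using norm_le_pi_norm x j) hxR)
            (abs_nonneg _))
      _ = (∑ j, |B i j|) * R := (Finset.sum_mul _ _ _).symm
      _ ≤ K * R := mul_le_mul_of_nonneg_right
          (Finset.single_le_sum (f := fun i => ∑ j, |B i j|)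
            (fun i _ => by positivity) (Finset.mem_univ i)) hR0
  have : |(z i : ℝ)| ≤ (N : ℝ) := le_trans hbound (Int.le_ceil _)
  rw [abs_le] at this
  constructor
  · exact_mod_cast this.1
  · exact_mod_cast this.2

-- counting transfer
lemma lemB {Λ : Set (Fin 2 → ℝ)} (hΛ : IsFullLattice 2 Λ) {k m γ γ' : ℝ}
    (hk : 0 < k) (hm : 0 < m) (hγ : γ' < γ)
    (h : {x | x ∈ Λ ∧ k * Pibar 2 x ≤ (k * ‖x‖) ^ (-γ)}.Infinite) :
    {x | x ∈ Λ ∧ m * Pibar 2 x ≤ (m * ‖x‖) ^ (-γ')}.Infinite := by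
  set C : ℝ := k ^ (-1-γ) * m ^ (1+γ') with hC
  have hCpos : 0 < C := by positivity
  set R : ℝ := max 1 (C ^ (γ - γ')⁻¹) with hR
  have hfin := lat_finite hΛ R
  have hinf : ({x | x ∈ Λ ∧ k * Pibar 2 x ≤ (k * ‖x‖) ^ (-γ)} \
      {x | x ∈ Λ ∧ ‖x‖ ≤ R}).Infinite := h.diff hfin
  refine hinf.mono ?_
  rintro x ⟨⟨hxΛ, hxk⟩, hxnot⟩
  have hxR : R < ‖x‖ := by
    by_contra hcon
    exact hxnot ⟨hxΛ, le_of_not_gt hcon⟩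
  refine ⟨hxΛ, ?_⟩
  set t := ‖x‖ with ht
  have ht0 : (0:ℝ) < t := lt_of_lt_of_le one_pos (le_trans (le_max_left _ _) hxR.le)
  have hγγ : (0:ℝ) < γ - γ' := by linarith
  have htC : C ≤ t ^ (γ - γ') := by
    have h1 : C ^ (γ-γ')⁻¹ ≤ t := le_trans (le_max_right _ _) hxR.le
    calc C = (C ^ (γ-γ')⁻¹) ^ (γ-γ') := (Real.rpow_inv_rpow hCpos.le (by linarith)).symm
      _ ≤ t ^ (γ-γ') := Real.rpow_le_rpow (Real.rpow_nonneg hCpos.le _) h1 hγγ.le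
  have e1 : (k * t) ^ (-γ) = k ^ (-γ) * t ^ (-γ) := Real.mul_rpow hk.le ht0.le
  have e2 : (m * t) ^ (-γ') = m ^ (-γ') * t ^ (-γ') := Real.mul_rpow hm.le ht0.le
  have hPix : Pibar 2 x ≤ k⁻¹ * (k ^ (-γ) * t ^ (-γ)) := by
    rw [← e1]
    calc Pibar 2 x = k⁻¹ * (k * Pibar 2 x) := by field_simp
      _ ≤ k⁻¹ * ((k * t) ^ (-γ)) := mul_le_mul_of_nonneg_left hxk (inv_nonneg.2 hk.le)
  have hk1 : k⁻¹ * k ^ (-γ) = k ^ (-1-γ) := by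
    rw [← Real.rpow_neg_one k, ← Real.rpow_add hk]
    congr 1
  have hm1 : m ^ (-γ') * m ^ (1+γ') = m := by
    rw [← Real.rpow_add hm]
    norm_num
  have ht1 : t ^ (γ-γ') * t ^ (-γ) = t ^ (-γ') := by
    rw [← Real.rpow_add ht0]
    congr 1
    ring
  calc m * Pibar 2 x ≤ m * (k⁻¹ * (k ^ (-γ) * t ^ (-γ))) :=
        mul_le_mul_of_nonneg_left hPix hm.le
    _ = (m ^ (-γ') * C) * t ^ (-γ) := by
        rw [hC]
        rw [show m * (k⁻¹ * (k ^ (-γ) * t ^ (-γ))) = (k⁻¹ * k ^ (-γ)) * (m * t ^ (-γ)) by ring,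
          hk1]
        rw [show m ^ (-γ') * (k ^ (-1-γ) * m ^ (1+γ')) * t ^ (-γ)
          = k ^ (-1-γ) * ((m ^ (-γ') * m ^ (1+γ')) * t ^ (-γ)) by ring, hm1]
    _ ≤ (m ^ (-γ') * t ^ (γ-γ')) * t ^ (-γ) := by
        have := mul_le_mul_of_nonneg_left htC (Real.rpow_nonneg hm.le (-γ'))
        exact mul_le_mul_of_nonneg_right this (Real.rpow_nonneg ht0.le _)
    _ = (m * t) ^ (-γ') := by rw [e2, mul_assoc, ht1]

/-- For a full-rank lattice `Λ ⊆ ℝ²`: `ω(Λ*) = ω(Λ)`. -/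
theorem stmt_16 (Λ : Set (Fin 2 → ℝ)) (hΛ : IsFullLattice 2 Λ) :
    dioExp 2 (dualLattice 2 Λ) = dioExp 2 Λ := by
  obtain ⟨A, hdet, hL⟩ := hΛ
  set c : ℝ := (A.det)⁻¹ with hc
  have hcne : c ≠ 0 := inv_ne_zero hdet
  set f : (Fin 2 → ℝ) → (Fin 2 → ℝ) := fun x => c • ![-(x 1), x 0] with hf
  have hf0 : ∀ x, f x 0 = c * (-(x 1)) := by intro x; simp [hf]
  have hf1 : ∀ x, f x 1 = c * x 0 := by intro x; simp [hf]
  have hfinj : Function.Injective f := by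
    intro x y hxy
    have h0 := congrFun hxy 0
    have h1 := congrFun hxy 1
    rw [hf0, hf0] at h0; rw [hf1, hf1] at h1
    funext i
    fin_cases i
    · exact mul_left_cancel₀ hcne h1
    · exact neg_inj.mp (mul_left_cancel₀ hcne h0)
  have hdual : dualLattice 2 Λ = f '' Λ := by
    ext y
    constructor
    · intro hy
      obtain ⟨n0, h0⟩ := hy (A.mulVec fun i => ((![1,0] : Fin 2 → ℤ) i : ℝ))
        (by rw [hL]; exact ⟨![1,0], rfl⟩)
      obtain ⟨n1, h1⟩ := hy (A.mulVec fun i => ((![0,1] : Fin 2 → ℤ) i : ℝ))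
        (by rw [hL]; exact ⟨![0,1], rfl⟩)
      simp [Matrix.mulVec, dotProduct, Fin.sum_univ_two] at h0 h1
      refine ⟨A.mulVec fun i => ((![n1, -n0] : Fin 2 → ℤ) i : ℝ),
        by rw [hL]; exact ⟨![n1,-n0], rfl⟩, ?_⟩
      have hdet2 : A 0 0 * A 1 1 - A 0 1 * A 1 0 ≠ 0 := by
        rwa [Matrix.det_fin_two] at hdet
      have hcval : c = (A 0 0 * A 1 1 - A 0 1 * A 1 0)⁻¹ := by rw [hc, Matrix.det_fin_two]
      funext i
      fin_cases i
      · show f _ 0 = y 0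
        rw [hf0]
        simp only [Matrix.mulVec, dotProduct, Fin.sum_univ_two, hcval,
          Matrix.cons_val_zero, Matrix.cons_val_one, Matrix.head_cons, Int.cast_neg]
        field_simp
        linear_combination (-(A 1 1)) * h0 + A 1 0 * h1
      · show f _ 1 = y 1
        rw [hf1]
        simp only [Matrix.mulVec, dotProduct, Fin.sum_univ_two, hcval,
          Matrix.cons_val_zero, Matrix.cons_val_one, Matrix.head_cons, Int.cast_neg]
        field_simp
        linear_combination (-(A 0 0)) * h1 + A 0 1 * h0
    · rintro ⟨x, hx, rfl⟩
      rw [hL] at hx; obtain ⟨z, rfl⟩ := hx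
      intro x' hx'; rw [hL] at hx'; obtain ⟨w, rfl⟩ := hx'
      refine ⟨z 0 * w 1 - z 1 * w 0, ?_⟩
      have hdet2 : A 0 0 * A 1 1 - A 0 1 * A 1 0 ≠ 0 := by
        rwa [Matrix.det_fin_two] at hdet
      have hcval : c = (A 0 0 * A 1 1 - A 0 1 * A 1 0)⁻¹ := by rw [hc, Matrix.det_fin_two]
      simp only [Fin.sum_univ_two, hf0, hf1, Matrix.mulVec, dotProduct, hcval,
        Matrix.cons_val_zero, Matrix.cons_val_one, Matrix.head_cons]
      push_cast
      field_simp
      ring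
  have hhalf : |c| ^ (1/(2:ℝ)) * |c| ^ (1/(2:ℝ)) = |c| := by
    rw [← Real.rpow_add (abs_pos.2 hcne)]; norm_num
  have hPi : ∀ x, Pibar 2 (f x) = |c| * Pibar 2 x := by
    intro x
    have habs0 : |f x 0| = |c| * |x 1| := by rw [hf0, abs_mul, abs_neg]
    have habs1 : |f x 1| = |c| * |x 0| := by rw [hf1, abs_mul]
    simp only [Pibar, Fin.prod_univ_two, Nat.cast_ofNat, habs0, habs1,
      Real.mul_rpow (abs_nonneg _) (abs_nonneg _)]
    rw [mul_mul_mul_comm, hhalf]; ring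
  have hvnorm : ∀ x : Fin 2 → ℝ, ‖![-(x 1), x 0]‖ = ‖x‖ := by
    intro x
    apply le_antisymm
    · apply pi_norm_le_iff_of_nonneg (norm_nonneg x) |>.2
      intro i; fin_cases i
      · simpa using norm_le_pi_norm x 1
      · simpa using norm_le_pi_norm x 0
    · apply pi_norm_le_iff_of_nonneg (norm_nonneg _) |>.2
      intro i; fin_cases i
      · have := norm_le_pi_norm ![-(x 1), x 0] 1; simpa using this
      · have := norm_le_pi_norm ![-(x 1), x 0] 0; simpa using this
  have hnorm : ∀ x, ‖f x‖ = |c| * ‖x‖ := by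
    intro x
    show ‖c • ![-(x 1), x 0]‖ = _
    rw [norm_smul, Real.norm_eq_abs, hvnorm]
  have habs : (0:ℝ) < |c| := abs_pos.2 hcne
  have trans1 : ∀ γ γ' : ℝ, γ' < γ →
      {x | x ∈ Λ ∧ Pibar 2 x ≤ ‖x‖ ^ (-γ)}.Infinite →
      {x | x ∈ dualLattice 2 Λ ∧ Pibar 2 x ≤ ‖x‖ ^ (-γ')}.Infinite := by
    intro γ γ' hlt hinf
    have h1 : {x | x ∈ Λ ∧ (1:ℝ) * Pibar 2 x ≤ ((1:ℝ) * ‖x‖) ^ (-γ)}.Infinite := by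
      simpa using hinf
    have h2 := lemB ⟨A, hdet, hL⟩ one_pos habs hlt h1
    refine Set.Infinite.mono ?_ (Set.Infinite.image hfinj.injOn h2)
    rintro y ⟨x, ⟨hxΛ, hxle⟩, rfl⟩
    refine ⟨hdual ▸ Set.mem_image_of_mem f hxΛ, ?_⟩
    rw [hPi, hnorm]; exact hxle
  have trans2 : ∀ γ γ' : ℝ, γ' < γ →
      {x | x ∈ dualLattice 2 Λ ∧ Pibar 2 x ≤ ‖x‖ ^ (-γ)}.Infinite →
      {x | x ∈ Λ ∧ Pibar 2 x ≤ ‖x‖ ^ (-γ')}.Infinite := by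
    intro γ γ' hlt hinf
    have hEq : {x | x ∈ dualLattice 2 Λ ∧ Pibar 2 x ≤ ‖x‖ ^ (-γ)}
        = f '' {x | x ∈ Λ ∧ |c| * Pibar 2 x ≤ (|c| * ‖x‖) ^ (-γ)} := by
      rw [hdual]
      ext y; constructor
      · rintro ⟨⟨x, hxΛ, rfl⟩, hle⟩
        exact ⟨x, ⟨hxΛ, by rwa [hPi, hnorm] at hle⟩, rfl⟩
      · rintro ⟨x, ⟨hxΛ, hle⟩, rfl⟩
        exact ⟨⟨x, hxΛ, rfl⟩, by rw [hPi, hnorm]; exact hle⟩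
    rw [hEq] at hinf
    have h2 := hinf.of_image
    have h3 := lemB ⟨A, hdet, hL⟩ habs one_pos hlt h2
    simpa using h3
  apply le_antisymm
  · apply sSup_le
    rintro g ⟨γ, rfl, hinf⟩
    apply le_of_forall_lt_imp_le_of_dense
    intro b hb
    induction b using EReal.rec with
    | bot => exact bot_le
    | coe r =>
        exact le_sSup ⟨r, rfl, trans2 γ r (by exact_mod_cast hb) hinf⟩
    | top => exact absurd hb not_top_lt
  · apply sSup_le
    rintro g ⟨γ, rfl, hinf⟩
    apply le_of_forall_lt_imp_le_of_dense
    intro b hb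
    induction b using EReal.rec with
    | bot => exact bot_le
    | coe r =>
        exact le_sSup ⟨r, rfl, trans1 γ r (by exact_mod_cast hb) hinf⟩
    | top => exact absurd hb not_top_lt

end
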